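/- Let c₁, c₂ > 0, k > 0 and r₁, r₂ > 0 with r₁·k < 1 and r₂·k > 1. Suppose V : [0,∞) → ℝ is differentiable, V(t) ≥ 0 for all t ≥ 0, and V′(t) ≤ −(c₁·V(t)^{r₁} + c₂·V(t)^{r₂})^k for all t ≥ 0. Then V(t) = 0 for all t ≥ 1/(c₁^k·(1−r₁k)) + 1/(c₂^k·(r₂k−1)); in particular the settling time is bounded uniformly in the initial value V(0). (Scalar Lyapunov comparison form of fixed-time stability, Lemma 2(2).) -/

import Mathlib

/-- Scalar Lyapunov comparison form of fixed-time stability (Lemma 2(2)). -/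
theorem fixed_time_lyapunov_comparison
    (c₁ c₂ k r₁ r₂ : ℝ) (hc₁ : 0 < c₁) (hc₂ : 0 < c₂) (hk : 0 < k)
    (hr₁ : 0 < r₁) (hr₂ : 0 < r₂) (hr₁k : r₁ * k < 1) (hr₂k : 1 < r₂ * k)
    (V V' : ℝ → ℝ)
    (hV : ∀ t ≥ (0:ℝ), HasDerivAt V (V' t) t)
    (hVnonneg : ∀ t ≥ (0:ℝ), 0 ≤ V t)
    (hV' : ∀ t ≥ (0:ℝ), V' t ≤ -(c₁ * (V t) ^ r₁ + c₂ * (V t) ^ r₂) ^ k) :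
    ∀ t : ℝ, 1 / (c₁ ^ k * (1 - r₁ * k)) + 1 / (c₂ ^ k * (r₂ * k - 1)) ≤ t → V t = 0 := by
  have hc₁k : (0:ℝ) < c₁ ^ k := Real.rpow_pos_of_pos hc₁ k
  have hc₂k : (0:ℝ) < c₂ ^ k := Real.rpow_pos_of_pos hc₂ k
  set C₁ : ℝ := c₁ ^ k * (1 - r₁ * k) with hC₁def
  set C₂ : ℝ := c₂ ^ k * (r₂ * k - 1) with hC₂def
  have hC₁ : 0 < C₁ := mul_pos hc₁k (by linarith)
  have hC₂ : 0 < C₂ := mul_pos hc₂k (by linarith)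
  set T₁ : ℝ := 1 / C₁ with hT₁def
  set T₂ : ℝ := 1 / C₂ with hT₂def
  have hT₁ : 0 < T₁ := by positivity
  have hT₂ : 0 < T₂ := by positivity
  -- base of the power is nonnegative
  have hbase : ∀ t ≥ (0:ℝ), 0 ≤ c₁ * (V t) ^ r₁ + c₂ * (V t) ^ r₂ := by
    intro t ht
    have h1 := Real.rpow_nonneg (hVnonneg t ht) r₁
    have h2 := Real.rpow_nonneg (hVnonneg t ht) r₂
    nlinarith
  have hV'le0 : ∀ t ≥ (0:ℝ), V' t ≤ 0 := by
    intro t ht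
    have := hV' t ht
    have h0 : 0 ≤ (c₁ * (V t) ^ r₁ + c₂ * (V t) ^ r₂) ^ k :=
      Real.rpow_nonneg (hbase t ht) k
    linarith
  -- V is antitone on [0, ∞)
  have hanti : AntitoneOn V (Set.Ici (0:ℝ)) := by
    apply antitoneOn_of_deriv_nonpos (convex_Ici 0)
    · exact fun t ht => (hV t ht).continuousAt.continuousWithinAt
    · intro t ht
      rw [interior_Ici] at ht
      exact (hV t (le_of_lt ht)).differentiableAt.differentiableWithinAt
    · intro t ht
      rw [interior_Ici] at ht
      rw [(hV t ht.le).deriv]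
      exact hV'le0 t ht.le
  -- Phase 1 : V T₂ ≤ 1
  have hVT₂ : V T₂ ≤ 1 := by
    by_contra h1
    push_neg at h1
    have hbig : ∀ t ∈ Set.Icc (0:ℝ) T₂, 1 < V t := by
      intro t ht
      exact lt_of_lt_of_le h1 (hanti (Set.mem_Ici.2 ht.1) (Set.mem_Ici.2 hT₂.le) ht.2)
    set p : ℝ := 1 - r₂ * k with hpdef
    have hp : p < 0 := by simp [hpdef]; linarith
    set W : ℝ → ℝ := fun t => V t ^ p with hWdef
    have hWd : ∀ t ∈ Set.Icc (0:ℝ) T₂,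
        HasDerivAt W (V' t * p * V t ^ (p - 1)) t := by
      intro t ht
      exact (hV t ht.1).rpow_const (Or.inl (by linarith [hbig t ht]))
    have key := Convex.mul_sub_le_image_sub_of_le_deriv (convex_Icc (0:ℝ) T₂)
      (f := W) (C := C₂)
      (fun t ht => (hWd t ht).continuousAt.continuousWithinAt)
      (by
        intro t ht
        rw [interior_Icc] at ht
        exact (hWd t ⟨ht.1.le, ht.2.le⟩).differentiableAt.differentiableWithinAt)
      (by
        intro t ht
        rw [interior_Icc] at ht
        have ht' : t ∈ Set.Icc (0:ℝ) T₂ := ⟨ht.1.le, ht.2.le⟩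
        rw [(hWd t ht').deriv]
        have hVt1 : 1 < V t := hbig t ht'
        have hVtpos : 0 < V t := by linarith
        -- V' t ≤ -c₂^k * V t ^ (r₂ * k)
        have hb : c₂ * V t ^ r₂ ≤ c₁ * V t ^ r₁ + c₂ * V t ^ r₂ := by
          have := Real.rpow_nonneg hVtpos.le r₁
          nlinarith
        have hmon : (c₂ * V t ^ r₂) ^ k ≤ (c₁ * V t ^ r₁ + c₂ * V t ^ r₂) ^ k :=
          Real.rpow_le_rpow (by positivity) hb hk.le
        have heq : (c₂ * V t ^ r₂) ^ k = c₂ ^ k * V t ^ (r₂ * k) := by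
          rw [Real.mul_rpow hc₂.le (Real.rpow_nonneg hVtpos.le r₂),
            ← Real.rpow_mul hVtpos.le]
        have hV'le : V' t ≤ -(c₂ ^ k * V t ^ (r₂ * k)) := by
          have := hV' t ht'.1
          rw [← heq]; linarith
        have hcoef : p * V t ^ (p - 1) < 0 := by
          have : (0:ℝ) < V t ^ (p - 1) := Real.rpow_pos_of_pos hVtpos _
          exact mul_neg_of_neg_of_pos hp this
        have hstep : (-(c₂ ^ k * V t ^ (r₂ * k))) * (p * V t ^ (p - 1)) ≤
            V' t * (p * V t ^ (p - 1)) :=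
          mul_le_mul_of_nonpos_right hV'le hcoef.le
        have hcomp : (-(c₂ ^ k * V t ^ (r₂ * k))) * (p * V t ^ (p - 1)) = C₂ := by
          have hmulpow : V t ^ (r₂ * k) * V t ^ (p - 1) = 1 := by
            rw [← Real.rpow_add hVtpos]
            have : r₂ * k + (p - 1) = 0 := by simp [hpdef]
            rw [this, Real.rpow_zero]
          have : (-(c₂ ^ k * V t ^ (r₂ * k))) * (p * V t ^ (p - 1))
              = -(c₂ ^ k) * p * (V t ^ (r₂ * k) * V t ^ (p - 1)) := by ring
          rw [this, hmulpow, hC₂def, hpdef]; ring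
        calc C₂ = (-(c₂ ^ k * V t ^ (r₂ * k))) * (p * V t ^ (p - 1)) := hcomp.symm
          _ ≤ V' t * (p * V t ^ (p - 1)) := hstep
          _ = V' t * p * V t ^ (p - 1) := by ring)
      0 (Set.left_mem_Icc.2 hT₂.le) T₂ (Set.right_mem_Icc.2 hT₂.le) hT₂.le
    -- C₂ * T₂ = 1
    have hCT : C₂ * (T₂ - 0) = 1 := by
      rw [hT₂def]; field_simp; ring
    rw [hCT] at key
    have hW0 : 0 < W 0 := Real.rpow_pos_of_pos (by linarith [hbig 0 ⟨le_refl 0, hT₂.le⟩]) p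
    have hWT₂ : W T₂ < 1 := Real.rpow_lt_one_of_one_lt_of_neg h1 hp
    linarith
  -- Phase 2 : V (T₁ + T₂) = 0
  have hT₂T : T₂ ≤ T₁ + T₂ := by linarith
  have hVT : V (T₁ + T₂) = 0 := by
    by_contra h0
    have hVTpos : 0 < V (T₁ + T₂) :=
      lt_of_le_of_ne (hVnonneg _ (by linarith)) (Ne.symm h0)
    have hpos : ∀ t ∈ Set.Icc T₂ (T₁ + T₂), 0 < V t := fun t ht =>
      lt_of_lt_of_le hVTpos (hanti (Set.mem_Ici.2 (le_trans hT₂.le ht.1))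
        (Set.mem_Ici.2 (by linarith)) ht.2)
    have hle1 : ∀ t ∈ Set.Icc T₂ (T₁ + T₂), V t ≤ 1 := fun t ht =>
      le_trans (hanti (Set.mem_Ici.2 hT₂.le) (Set.mem_Ici.2 (le_trans hT₂.le ht.1)) ht.1) hVT₂
    set p : ℝ := 1 - r₁ * k with hpdef
    have hp : 0 < p := by simp [hpdef]; linarith
    set U : ℝ → ℝ := fun t => V t ^ p with hUdef
    have hUd : ∀ t ∈ Set.Icc T₂ (T₁ + T₂),
        HasDerivAt U (V' t * p * V t ^ (p - 1)) t := by
      intro t ht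
      exact (hV t (le_trans hT₂.le ht.1)).rpow_const (Or.inl (ne_of_gt (hpos t ht)))
    have key := Convex.image_sub_le_mul_sub_of_deriv_le (convex_Icc T₂ (T₁ + T₂))
      (f := U) (C := -C₁)
      (fun t ht => (hUd t ht).continuousAt.continuousWithinAt)
      (by
        intro t ht
        rw [interior_Icc] at ht
        exact (hUd t ⟨ht.1.le, ht.2.le⟩).differentiableAt.differentiableWithinAt)
      (by
        intro t ht
        rw [interior_Icc] at ht
        have ht' : t ∈ Set.Icc T₂ (T₁ + T₂) := ⟨ht.1.le, ht.2.le⟩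
        rw [(hUd t ht').deriv]
        have hVtpos : 0 < V t := hpos t ht'
        have ht0 : (0:ℝ) ≤ t := le_trans hT₂.le ht'.1
        have hb : c₁ * V t ^ r₁ ≤ c₁ * V t ^ r₁ + c₂ * V t ^ r₂ := by
          have := Real.rpow_nonneg hVtpos.le r₂
          nlinarith
        have hmon : (c₁ * V t ^ r₁) ^ k ≤ (c₁ * V t ^ r₁ + c₂ * V t ^ r₂) ^ k :=
          Real.rpow_le_rpow (by positivity) hb hk.le
        have heq : (c₁ * V t ^ r₁) ^ k = c₁ ^ k * V t ^ (r₁ * k) := by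
          rw [Real.mul_rpow hc₁.le (Real.rpow_nonneg hVtpos.le r₁),
            ← Real.rpow_mul hVtpos.le]
        have hV'le : V' t ≤ -(c₁ ^ k * V t ^ (r₁ * k)) := by
          have := hV' t ht0
          rw [← heq]; linarith
        have hcoef : 0 < p * V t ^ (p - 1) :=
          mul_pos hp (Real.rpow_pos_of_pos hVtpos _)
        have hstep : V' t * (p * V t ^ (p - 1)) ≤
            (-(c₁ ^ k * V t ^ (r₁ * k))) * (p * V t ^ (p - 1)) :=
          mul_le_mul_of_nonneg_right hV'le hcoef.le
        have hcomp : (-(c₁ ^ k * V t ^ (r₁ * k))) * (p * V t ^ (p - 1)) = -C₁ := by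
          have hmulpow : V t ^ (r₁ * k) * V t ^ (p - 1) = 1 := by
            rw [← Real.rpow_add hVtpos]
            have : r₁ * k + (p - 1) = 0 := by simp [hpdef]
            rw [this, Real.rpow_zero]
          have : (-(c₁ ^ k * V t ^ (r₁ * k))) * (p * V t ^ (p - 1))
              = -(c₁ ^ k) * p * (V t ^ (r₁ * k) * V t ^ (p - 1)) := by ring
          rw [this, hmulpow, hC₁def, hpdef]; ring
        calc V' t * p * V t ^ (p - 1) = V' t * (p * V t ^ (p - 1)) := by ring
          _ ≤ (-(c₁ ^ k * V t ^ (r₁ * k))) * (p * V t ^ (p - 1)) := hstep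
          _ = -C₁ := hcomp)
      T₂ (Set.left_mem_Icc.2 hT₂T) (T₁ + T₂) (Set.right_mem_Icc.2 hT₂T) hT₂T
    have hCT : (-C₁) * (T₁ + T₂ - T₂) = -1 := by
      have : T₁ + T₂ - T₂ = T₁ := by ring
      rw [this, hT₁def]; field_simp
    rw [hCT] at key
    have hUT₂ : U T₂ ≤ 1 :=
      Real.rpow_le_one (hVnonneg T₂ hT₂.le) hVT₂ hp.le
    have hUT : 0 < U (T₁ + T₂) := Real.rpow_pos_of_pos hVTpos p
    linarith
  -- Conclusion
  intro t ht
  have hTt : T₁ + T₂ ≤ t := ht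
  have h1 : V t ≤ V (T₁ + T₂) :=
    hanti (Set.mem_Ici.2 (by linarith)) (Set.mem_Ici.2 (by linarith)) hTt
  have h2 : 0 ≤ V t := hVnonneg t (by linarith)
  rw [hVT] at h1
  linarith
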